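/- Let (x*, λ*, μ*) satisfy the KKT conditions for min_{x∈Δ} f(x). Then there exists ρ > 0 such that for each x ∈ Δ with ‖x − x*‖ < ρ one has {i : x*_i = 0, μ_i(x*) > 0} ⊆ A(x) ⊆ {i : x*_i = 0}. Furthermore, if strict complementarity holds at x* (i.e., μ*_i > 0 for every i with x*_i = 0), then {i : x*_i = 0, μ_i(x*) > 0} = A(x) = {i : x*_i = 0} for each x ∈ Δ with ‖x − x*‖ < ρ. -/

import Mathlib

open scoped BigOperators

noncomputable section

/-- The unit simplex in `ℝⁿ`. -/
def unitSimplex (n : ℕ) : Set (EuclideanSpace ℝ (Fin n)) :=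
  {x | (∑ i, x i) = 1 ∧ ∀ i, 0 ≤ x i}

/-- The multiplier function `μᵢ(x) = ∇ᵢ f(x) - ∇f(x)ᵀx`. -/
def muFun {n : ℕ} (f : EuclideanSpace ℝ (Fin n) → ℝ) (x : EuclideanSpace ℝ (Fin n))
    (i : Fin n) : ℝ :=
  gradient f x i - ∑ j, gradient f x j * x j

/-- The active-set estimate `A(x) = {i : xᵢ ≤ ε μᵢ(x)}` (with parameter `ε > 0`). -/
def activeEstimate {n : ℕ} (f : EuclideanSpace ℝ (Fin n) → ℝ) (eps : ℝ)
    (x : EuclideanSpace ℝ (Fin n)) : Set (Fin n) :=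
  {i | x i ≤ eps * muFun f x i}

lemma cont_grad_coord {n : ℕ} (f : EuclideanSpace ℝ (Fin n) → ℝ) (hf : ContDiff ℝ 1 f)
    (i : Fin n) : Continuous fun x => gradient f x i := by
  have h1 : Continuous fun x => gradient f x :=
    ((InnerProductSpace.toDual ℝ (EuclideanSpace ℝ (Fin n))).symm.continuous.comp
      (hf.continuous_fderiv one_ne_zero))
  exact (PiLp.continuous_apply _ _ i).comp h1

lemma cont_apply_coord {n : ℕ} (i : Fin n) :
    Continuous fun x : EuclideanSpace ℝ (Fin n) => x i :=
  PiLp.continuous_apply _ _ i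

lemma cont_muFun {n : ℕ} (f : EuclideanSpace ℝ (Fin n) → ℝ) (hf : ContDiff ℝ 1 f)
    (i : Fin n) : Continuous fun x => muFun f x i := by
  unfold muFun
  exact (cont_grad_coord f hf i).sub
    (continuous_finset_sum _ fun j _ => (cont_grad_coord f hf j).mul (cont_apply_coord j))

/-- In a neighborhood of a KKT point, the active-set estimate is squeezed between the
strictly complementary active variables and the active set; under strict complementarity
all three sets coincide. -/
theorem active_set_identification (n : ℕ) (f : EuclideanSpace ℝ (Fin n) → ℝ)
    (hf : ContDiff ℝ 1 f) (eps : ℝ) (heps : 0 < eps)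
    (xstar : EuclideanSpace ℝ (Fin n)) (hxstar : xstar ∈ unitSimplex n)
    (lam : ℝ) (mu : Fin n → ℝ)
    (hkkt : (∀ i, gradient f xstar i - lam - mu i = 0) ∧
      (∑ i, mu i * xstar i) = 0 ∧ (∀ i, 0 ≤ mu i)) :
    ∃ rho > (0 : ℝ),
      (∀ x ∈ unitSimplex n, ‖x - xstar‖ < rho →
        {i | xstar i = 0 ∧ 0 < muFun f xstar i} ⊆ activeEstimate f eps x ∧
        activeEstimate f eps x ⊆ {i | xstar i = 0}) ∧
      ((∀ i, xstar i = 0 → 0 < mu i) →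
        ∀ x ∈ unitSimplex n, ‖x - xstar‖ < rho →
          {i | xstar i = 0 ∧ 0 < muFun f xstar i} = activeEstimate f eps x ∧
          activeEstimate f eps x = {i | xstar i = 0}) := by
  obtain ⟨hgradeq, hsum, hmu0⟩ := hkkt
  obtain ⟨hx1, hx0⟩ := hxstar
  -- complementarity per coordinate
  have hcomp : ∀ i, mu i * xstar i = 0 := by
    intro i
    exact (Finset.sum_eq_zero_iff_of_nonneg
      (fun j _ => mul_nonneg (hmu0 j) (hx0 j))).mp hsum i (Finset.mem_univ i)
  have hgrad : ∀ i, gradient f xstar i = lam + mu i := fun i => by linarith [hgradeq i]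
  have hlam : (∑ j, gradient f xstar j * xstar j) = lam := by
    calc ∑ j, gradient f xstar j * xstar j = ∑ j, (lam * xstar j + mu j * xstar j) := by
          refine Finset.sum_congr rfl fun j _ => ?_
          rw [hgrad j]; ring
      _ = lam * ∑ j, xstar j + ∑ j, mu j * xstar j := by
          rw [Finset.sum_add_distrib, Finset.mul_sum]
      _ = lam := by rw [hx1, hsum]; ring
  have hmueq : ∀ i, muFun f xstar i = mu i := by
    intro i; unfold muFun; rw [hlam, hgrad i]; ring
  set g : EuclideanSpace ℝ (Fin n) → Fin n → ℝ := fun x i => x i - eps * muFun f x i with hgdef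
  have hcont : ∀ i, Continuous fun x => g x i := fun i =>
    (cont_apply_coord i).sub (continuous_const.mul (cont_muFun f hf i))
  set S : Set (EuclideanSpace ℝ (Fin n)) :=
    {x | ∀ i, (0 < xstar i → 0 < g x i) ∧ (0 < mu i → g x i < 0)} with hSdef
  have hSopen : IsOpen S := by
    have hSeq : S = ⋂ i, ({x | 0 < xstar i → 0 < g x i} ∩ {x | 0 < mu i → g x i < 0}) := by
      ext x
      simp only [hSdef, Set.mem_setOf_eq, Set.mem_iInter, Set.mem_inter_iff]
    rw [hSeq]
    refine isOpen_iInter_of_finite fun i => IsOpen.inter ?_ ?_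
    · by_cases h : 0 < xstar i
      · have : {x | 0 < xstar i → 0 < g x i} = {x | 0 < g x i} := by ext y; simp [h]
        rw [this]; exact isOpen_lt continuous_const (hcont i)
      · have : {x | 0 < xstar i → 0 < g x i} = Set.univ := by ext y; simp [h]
        rw [this]; exact isOpen_univ
    · by_cases h : 0 < mu i
      · have : {x | 0 < mu i → g x i < 0} = {x | g x i < 0} := by ext y; simp [h]
        rw [this]; exact isOpen_lt (hcont i) continuous_const
      · have : {x | 0 < mu i → g x i < 0} = Set.univ := by ext y; simp [h]
        rw [this]; exact isOpen_univ
  have hxS : xstar ∈ S := by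
    intro i
    constructor
    · intro h
      have hmui : mu i = 0 := by
        rcases mul_eq_zero.mp (hcomp i) with h' | h'
        · exact h'
        · linarith
      have : g xstar i = xstar i := by simp [hgdef, hmueq i, hmui]
      rw [this]; exact h
    · intro h
      have hxi : xstar i = 0 := by
        rcases mul_eq_zero.mp (hcomp i) with h' | h'
        · linarith
        · exact h'
      have : g xstar i = -(eps * mu i) := by simp [hgdef, hmueq i, hxi]
      rw [this]
      have := mul_pos heps h
      linarith
  obtain ⟨rho, hrho, hball⟩ := Metric.isOpen_iff.mp hSopen xstar hxS
  have key : ∀ x ∈ unitSimplex n, ‖x - xstar‖ < rho →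
      {i | xstar i = 0 ∧ 0 < muFun f xstar i} ⊆ activeEstimate f eps x ∧
      activeEstimate f eps x ⊆ {i | xstar i = 0} := by
    intro x hx hnear
    have hxS' : x ∈ S := hball (by rwa [Metric.mem_ball, dist_eq_norm])
    constructor
    · intro i hi
      have hmui : 0 < mu i := by rw [← hmueq i]; exact hi.2
      have hg : g x i < 0 := (hxS' i).2 hmui
      have h' : x i - eps * muFun f x i < 0 := hg
      show x i ≤ eps * muFun f x i
      linarith
    · intro i hi
      have hgle : x i - eps * muFun f x i ≤ 0 := by
        have : x i ≤ eps * muFun f x i := hi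
        linarith
      by_contra hne
      have hpos : 0 < xstar i := lt_of_le_of_ne (hx0 i) (Ne.symm hne)
      have : (0 : ℝ) < g x i := (hxS' i).1 hpos
      have : (0 : ℝ) < x i - eps * muFun f x i := this
      linarith
  refine ⟨rho, hrho, key, ?_⟩
  intro hsc x hx hnear
  obtain ⟨h1, h2⟩ := key x hx hnear
  have h3 : {i | xstar i = 0} ⊆ {i | xstar i = 0 ∧ 0 < muFun f xstar i} := by
    intro i hi
    exact ⟨hi, by rw [hmueq i]; exact hsc i hi⟩
  exact ⟨Set.Subset.antisymm h1 (fun i hi => h3 (h2 hi)),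
    Set.Subset.antisymm h2 (fun i hi => h1 (h3 hi))⟩
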